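/- Let d ≥ 2, s ∈ (0,1), μ > 0, 2μ + λ > 0. For every x ∈ ℝ^d and t > 0 the integral (t^{2s}/(2^{2s}Γ(s))) ∫_0^∞ W(x,r) e^{−t²/(4r)} r^{−s−1} dr converges absolutely (entrywise) and equals the matrix P(x,t) := μ^s (Γ(d/2+s)/(π^{d/2}Γ(s))) · t^{2s}/(|x|²+μt²)^{(d+2s)/2} · I − (Γ(d/2+s)/(2π^{d/2}Γ(s))) t^{2s} (∫_μ^{2μ+λ} σ^{s−1}/(|x|²+σt²)^{(d+2s)/2} dσ) · I + (d+2s)(Γ(d/2+s)/(2π^{d/2}Γ(s))) t^{2s} (∫_μ^{2μ+λ} σ^{s−1}/(|x|²+σt²)^{(d+2s+2)/2} dσ) · (x⊗x). -/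

import Mathlib

open Real MeasureTheory

noncomputable section

/-- The classical heat kernel `H(x,t) = (4πt)^{−d/2} e^{−|x|²/(4t)}`. -/
def heatKernel (d : ℕ) (x : EuclideanSpace ℝ (Fin d)) (t : ℝ) : ℝ :=
  (4 * π * t) ^ (-(d : ℝ) / 2) * Real.exp (-‖x‖ ^ 2 / (4 * t))

/-- The entries of the Hessian `∇²H(x,σ)` of the heat kernel. -/
def heatHessEntry (d : ℕ) (x : EuclideanSpace ℝ (Fin d)) (σ : ℝ) (i j : Fin d) : ℝ :=
  (4 * π * σ) ^ (-(d : ℝ) / 2) * Real.exp (-‖x‖ ^ 2 / (4 * σ)) *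
    (x i * x j / (4 * σ ^ 2) - (if i = j then 1 else 0) / (2 * σ))

/-- The entries of the Lamé–Navier heat kernel
`W(x,t) = H(x,μt) I + ∫_{μt}^{(2μ+λ)t} ∇²H(x,σ) dσ`. -/
def lameHeatEntry (d : ℕ) (μ lam : ℝ) (x : EuclideanSpace ℝ (Fin d)) (t : ℝ)
    (i j : Fin d) : ℝ :=
  heatKernel d x (μ * t) * (if i = j then 1 else 0) +
    ∫ σ in (μ * t)..((2 * μ + lam) * t), heatHessEntry d x σ i j

/-- The entries of the Poisson kernel `P(x,t)` for the Lamé–Navier extension problem. -/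
def lamePoissonEntry (d : ℕ) (s μ lam : ℝ) (x : EuclideanSpace ℝ (Fin d)) (t : ℝ)
    (i j : Fin d) : ℝ :=
  μ ^ s * (Real.Gamma ((d : ℝ) / 2 + s) / (π ^ ((d : ℝ) / 2) * Real.Gamma s)) *
      (t ^ (2 * s) / (‖x‖ ^ 2 + μ * t ^ 2) ^ (((d : ℝ) + 2 * s) / 2)) *
      (if i = j then 1 else 0) -
    (Real.Gamma ((d : ℝ) / 2 + s) / (2 * π ^ ((d : ℝ) / 2) * Real.Gamma s)) * t ^ (2 * s) *
      (∫ σ in μ..(2 * μ + lam),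
        σ ^ (s - 1) / (‖x‖ ^ 2 + σ * t ^ 2) ^ (((d : ℝ) + 2 * s) / 2)) *
      (if i = j then 1 else 0) +
    ((d : ℝ) + 2 * s) *
      (Real.Gamma ((d : ℝ) / 2 + s) / (2 * π ^ ((d : ℝ) / 2) * Real.Gamma s)) * t ^ (2 * s) *
      (∫ σ in μ..(2 * μ + lam),
        σ ^ (s - 1) / (‖x‖ ^ 2 + σ * t ^ 2) ^ (((d : ℝ) + 2 * s + 2) / 2)) *
      (x i * x j)

namespace LPaux

lemma mellin_aux {a A : ℝ} (ha : 0 < a) (hA : 0 < A) :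
    IntegrableOn (fun u : ℝ => u ^ (a - 1) * Real.exp (-(A * u))) (Set.Ioi 0) := by
  have h0 := Real.GammaIntegral_convergent ha
  have h1 := (integrableOn_Ioi_comp_mul_left_iff
      (fun u : ℝ => Real.exp (-u) * u ^ (a - 1)) 0 hA).2 (by simpa using h0)
  have h2 := h1.const_mul ((A:ℝ) ^ (a - 1))⁻¹
  refine IntegrableOn.congr_fun h2 (fun u hu => ?_) measurableSet_Ioi
  rw [mul_rpow hA.le (le_of_lt hu)]
  field_simp [ne_of_gt (rpow_pos_of_pos hA (a-1))]

lemma mellin_key : ∀ {a A : ℝ}, ∀ r ∈ Set.Ioi (0:ℝ),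
    (|(-1:ℝ)| * r ^ ((-1:ℝ) - 1)) • ((r ^ (-1:ℝ)) ^ (a - 1) * Real.exp (-(A * r ^ (-1:ℝ))))
      = Real.exp (-A / r) * r ^ (-a - 1) := by
  intro a A r hr
  have hr0 : (0:ℝ) < r := hr
  rw [smul_eq_mul, abs_neg, abs_one, one_mul, ← Real.rpow_mul hr0.le, Real.rpow_neg_one,
    ← mul_assoc, ← Real.rpow_add hr0, div_eq_mul_inv, neg_mul]
  ring_nf

lemma mellin_integrableOn {a A : ℝ} (ha : 0 < a) (hA : 0 < A) :
    IntegrableOn (fun r : ℝ => Real.exp (-A / r) * r ^ (-a - 1)) (Set.Ioi 0) := by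
  have h := (integrableOn_Ioi_comp_rpow_iff
      (fun u : ℝ => u ^ (a - 1) * Real.exp (-(A * u))) (p := -1) (by norm_num)).2
      (mellin_aux ha hA)
  exact IntegrableOn.congr_fun h (fun r hr => mellin_key r hr) measurableSet_Ioi

lemma mellin_integral {a A : ℝ} (ha : 0 < a) (hA : 0 < A) :
    ∫ r in Set.Ioi (0:ℝ), Real.exp (-A / r) * r ^ (-a - 1) = Real.Gamma a / A ^ a := by
  have h := integral_comp_rpow_Ioi
      (fun u : ℝ => u ^ (a - 1) * Real.exp (-(A * u))) (p := -1) (by norm_num)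
  rw [integral_rpow_mul_exp_neg_mul_Ioi ha hA] at h
  calc ∫ r in Set.Ioi (0:ℝ), Real.exp (-A / r) * r ^ (-a - 1)
      = ∫ r in Set.Ioi (0:ℝ),
          (|(-1:ℝ)| * r ^ ((-1:ℝ) - 1)) • ((r ^ (-1:ℝ)) ^ (a - 1) * Real.exp (-(A * r ^ (-1:ℝ)))) :=
        (setIntegral_congr_fun measurableSet_Ioi (fun r hr => (mellin_key r hr).symm))
    _ = (1 / A) ^ a * Real.Gamma a := h
    _ = Real.Gamma a / A ^ a := by
        rw [one_div, Real.inv_rpow hA.le, inv_mul_eq_div]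

lemma hess_point (d : ℕ) (s : ℝ) (x : EuclideanSpace ℝ (Fin d)) (t τ r : ℝ)
    (i j : Fin d) (hτ : 0 < τ) (hr : 0 < r) :
    heatHessEntry d x (τ*r) i j * r * Real.exp (-t^2/(4*r)) * r^(-s-1)
    = (4*π*τ)^(-(d:ℝ)/2) * ((x i * x j)/(4*τ^2) *
        (Real.exp (-((‖x‖^2/τ + t^2)/4)/r) * r^(-((d:ℝ)/2+s+1)-1))
      - (if i = j then (1:ℝ) else 0)/(2*τ) *
        (Real.exp (-((‖x‖^2/τ + t^2)/4)/r) * r^(-((d:ℝ)/2+s)-1))) := by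
  have h1 : 4*π*(τ*r) = (4*π*τ)*r := by ring
  have hexp : Real.exp (-((‖x‖^2/τ + t^2)/4)/r)
      = Real.exp (-‖x‖^2/(4*(τ*r))) * Real.exp (-t^2/(4*r)) := by
    rw [← Real.exp_add]; congr 1; field_simp; ring
  have e1 : r ^ (-((d:ℝ)/2+s+1)-1) = r ^ (-(d:ℝ)/2) * r ^ (-s-1) / r := by
    nth_rewrite 4 [show r = r ^ (1:ℝ) by rw [Real.rpow_one]]
    rw [← Real.rpow_add hr, ← Real.rpow_sub hr]
    congr 1; ring
  have e2 : r ^ (-((d:ℝ)/2+s)-1) = r ^ (-(d:ℝ)/2) * r ^ (-s-1) := by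
    rw [← Real.rpow_add hr]
    congr 1; ring
  rw [heatHessEntry, h1, Real.mul_rpow (by positivity) hr.le, hexp, e1, e2]
  have hτr : τ * r ≠ 0 := by positivity
  set δ : ℝ := (if i = j then (1:ℝ) else 0) with hδ
  field_simp

lemma heat_point (d : ℕ) (s : ℝ) (x : EuclideanSpace ℝ (Fin d)) (t μ' r : ℝ)
    (hμ : 0 < μ') (hr : 0 < r) :
    heatKernel d x (μ'*r) * Real.exp (-t^2/(4*r)) * r^(-s-1)
    = (4*π*μ')^(-(d:ℝ)/2) *
        (Real.exp (-((‖x‖^2/μ' + t^2)/4)/r) * r^(-((d:ℝ)/2+s)-1)) := by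
  have h1 : 4*π*(μ'*r) = (4*π*μ')*r := by ring
  have hexp : Real.exp (-((‖x‖^2/μ' + t^2)/4)/r)
      = Real.exp (-‖x‖^2/(4*(μ'*r))) * Real.exp (-t^2/(4*r)) := by
    rw [← Real.exp_add]; congr 1; field_simp; ring
  have e2 : r ^ (-((d:ℝ)/2+s)-1) = r ^ (-(d:ℝ)/2) * r ^ (-s-1) := by
    rw [← Real.rpow_add hr]
    congr 1; ring
  rw [heatKernel, h1, Real.mul_rpow (by positivity) hr.le, hexp, e2]
  ring

lemma alg_main (d : ℕ) (G gs y s t τ e : ℝ) (hy : 0 ≤ y) (ht : 0 < t) (hτ : 0 < τ)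
    (hgs : gs ≠ 0) :
    t^(2*s)/((2:ℝ)^(2*s)*gs) * ((4*π*τ)^(-(d:ℝ)/2) * (G / ((y/τ + t^2)/4)^((d:ℝ)/2+e)))
    = (4:ℝ)^(e - s) * (G/(π^((d:ℝ)/2) * gs)) * τ^e * (t^(2*s) / (y + τ*t^2)^((d:ℝ)/2+e)) := by
  have hX : 0 < y + τ*t^2 := by positivity
  have h1 : (y/τ + t^2)/4 = (y + τ*t^2)/(4*τ) := by field_simp
  have h2 : (4:ℝ)*π*τ = (4*τ)*π := by ring
  have h3 : ((4:ℝ)*τ)^((d:ℝ)/2+e) = (4*τ)^((d:ℝ)/2) * ((4:ℝ)^e * τ^e) := by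
    rw [Real.rpow_add (by positivity), Real.mul_rpow (by norm_num) hτ.le,
      Real.mul_rpow (by norm_num) hτ.le]
  have h4 : ((4:ℝ)*τ)^(-(d:ℝ)/2) * π^(-(d:ℝ)/2)
      = ((4*τ)^((d:ℝ)/2))⁻¹ * (π^((d:ℝ)/2))⁻¹ := by
    rw [neg_div, Real.rpow_neg (by positivity), Real.rpow_neg pi_nonneg]
  have h5 : (2:ℝ)^(2*s) = 4^s := by
    rw [Real.rpow_mul (by norm_num : (0:ℝ) ≤ 2), show ((2:ℝ)^(2:ℝ)) = 4 by
      rw [show (2:ℝ) = ((2:ℕ):ℝ) by norm_num, Real.rpow_natCast]; norm_num]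
  have h6 : (4:ℝ)^(e-s) = 4^e/4^s := Real.rpow_sub (by norm_num) e s
  rw [h1, Real.div_rpow hX.le (by positivity), h2,
    Real.mul_rpow (by positivity) pi_nonneg, h3, h4, h5, h6]
  have p1 : (0:ℝ) < (4*τ)^((d:ℝ)/2) := rpow_pos_of_pos (by positivity) _
  have p2 : (0:ℝ) < π^((d:ℝ)/2) := rpow_pos_of_pos pi_pos _
  have p3 : (0:ℝ) < (y + τ*t^2)^((d:ℝ)/2+e) := rpow_pos_of_pos hX _
  have p4 : (0:ℝ) < (4:ℝ)^s := rpow_pos_of_pos (by norm_num) _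
  field_simp

section perTau
variable {d : ℕ} {s : ℝ} {x : EuclideanSpace ℝ (Fin d)} {t τ m M : ℝ} {i j : Fin d}

lemma hess_integrableOn (ht : 0 < t) (hτ : 0 < τ) (has : 0 < (d:ℝ)/2 + s) :
    IntegrableOn (fun r : ℝ =>
      heatHessEntry d x (τ*r) i j * r * Real.exp (-t^2/(4*r)) * r^(-s-1)) (Set.Ioi 0) := by
  have hB : 0 < (‖x‖^2/τ + t^2)/4 := by positivity
  have h1 := ((mellin_integrableOn (show 0 < (d:ℝ)/2+s+1 by linarith) hB).const_mul
      ((x i * x j)/(4*τ^2))).sub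
    ((mellin_integrableOn has hB).const_mul ((if i = j then (1:ℝ) else 0)/(2*τ)))
  have h2 := h1.const_mul ((4*π*τ)^(-(d:ℝ)/2))
  exact IntegrableOn.congr_fun h2
    (fun r hr => (hess_point d s x t τ r i j hτ hr).symm) measurableSet_Ioi

lemma hess_integral (ht : 0 < t) (hτ : 0 < τ) (has : 0 < (d:ℝ)/2 + s) :
    ∫ r in Set.Ioi (0:ℝ),
        heatHessEntry d x (τ*r) i j * r * Real.exp (-t^2/(4*r)) * r^(-s-1)
    = (4*π*τ)^(-(d:ℝ)/2) * ((x i * x j)/(4*τ^2) *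
        (Real.Gamma ((d:ℝ)/2+s+1) / ((‖x‖^2/τ + t^2)/4)^((d:ℝ)/2+s+1))
      - (if i = j then (1:ℝ) else 0)/(2*τ) *
        (Real.Gamma ((d:ℝ)/2+s) / ((‖x‖^2/τ + t^2)/4)^((d:ℝ)/2+s))) := by
  have hB : 0 < (‖x‖^2/τ + t^2)/4 := by positivity
  rw [setIntegral_congr_fun measurableSet_Ioi
    (fun r hr => hess_point d s x t τ r i j hτ hr)]
  rw [integral_const_mul]
  rw [MeasureTheory.integral_sub
    ((mellin_integrableOn (show 0 < (d:ℝ)/2+s+1 by linarith) hB).const_mul _)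
    ((mellin_integrableOn has hB).const_mul _),
    integral_const_mul, integral_const_mul,
    mellin_integral (show 0 < (d:ℝ)/2+s+1 by linarith) hB, mellin_integral has hB]

lemma heat_integrableOn (ht : 0 < t) (hμ : 0 < τ) (has : 0 < (d:ℝ)/2 + s) :
    IntegrableOn (fun r : ℝ =>
      heatKernel d x (τ*r) * Real.exp (-t^2/(4*r)) * r^(-s-1)) (Set.Ioi 0) := by
  have hB : 0 < (‖x‖^2/τ + t^2)/4 := by positivity
  have h2 := (mellin_integrableOn has hB).const_mul ((4*π*τ)^(-(d:ℝ)/2))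
  exact IntegrableOn.congr_fun h2
    (fun r hr => (heat_point d s x t τ r hμ hr).symm) measurableSet_Ioi

lemma heat_integral (ht : 0 < t) (hμ : 0 < τ) (has : 0 < (d:ℝ)/2 + s) :
    ∫ r in Set.Ioi (0:ℝ), heatKernel d x (τ*r) * Real.exp (-t^2/(4*r)) * r^(-s-1)
    = (4*π*τ)^(-(d:ℝ)/2) *
        (Real.Gamma ((d:ℝ)/2+s) / ((‖x‖^2/τ + t^2)/4)^((d:ℝ)/2+s)) := by
  have hB : 0 < (‖x‖^2/τ + t^2)/4 := by positivity
  rw [setIntegral_congr_fun measurableSet_Ioi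
    (fun r hr => heat_point d s x t τ r hμ hr),
    integral_const_mul, mellin_integral has hB]

lemma hess_norm_bound (ht : 0 < t) (hm : 0 < m) (hτ1 : m ≤ τ) (has : 0 < (d:ℝ)/2 + s) :
    ∫ r in Set.Ioi (0:ℝ),
        ‖heatHessEntry d x (τ*r) i j * r * Real.exp (-t^2/(4*r)) * r^(-s-1)‖
    ≤ (4*π*m)^(-(d:ℝ)/2) *
        ((|x i * x j|/(4*m^2)) * (Real.Gamma ((d:ℝ)/2+s+1)/(t^2/4)^((d:ℝ)/2+s+1))
          + (1/(2*m)) * (Real.Gamma ((d:ℝ)/2+s)/(t^2/4)^((d:ℝ)/2+s))) := by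
  have hτ : 0 < τ := lt_of_lt_of_le hm hτ1
  have hB : 0 < (‖x‖^2/τ + t^2)/4 := by positivity
  have hQB : t^2/4 ≤ (‖x‖^2/τ + t^2)/4 := by
    have h0 : 0 ≤ ‖x‖^2/τ := div_nonneg (by positivity) hτ.le
    linarith
  have hexp0 : -(d:ℝ)/2 ≤ 0 := by
    rw [neg_div]; exact neg_nonpos.mpr (by positivity)
  set B := (‖x‖^2/τ + t^2)/4 with hBdef
  set Cm := (4*π*m)^(-(d:ℝ)/2) with hCm
  have hCm0 : 0 ≤ Cm := le_of_lt (rpow_pos_of_pos (by positivity) _)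
  have hCτCm : (4*π*τ)^(-(d:ℝ)/2) ≤ Cm :=
    rpow_le_rpow_of_nonpos (by positivity) (by nlinarith [pi_pos]) hexp0
  have hb1 : |x i * x j|/(4*τ^2) ≤ |x i * x j|/(4*m^2) := by gcongr
  have hb2 : |(if i = j then (1:ℝ) else 0)/(2*τ)| ≤ 1/(2*m) := by
    rw [abs_div]
    have h01 : |(if i = j then (1:ℝ) else 0)| ≤ 1 := by split <;> simp
    rw [abs_of_pos (show (0:ℝ) < 2*τ by positivity)]
    calc |(if i = j then (1:ℝ) else 0)|/(2*τ) ≤ 1/(2*τ) := by gcongr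
      _ ≤ 1/(2*m) := by gcongr
  set g : ℝ → ℝ := fun r => Cm * (|x i * x j|/(4*m^2)) *
      (Real.exp (-B/r) * r^(-((d:ℝ)/2+s+1)-1))
    + Cm * (1/(2*m)) * (Real.exp (-B/r) * r^(-((d:ℝ)/2+s)-1)) with hg
  have hgInt : IntegrableOn g (Set.Ioi 0) :=
    ((mellin_integrableOn (show 0 < (d:ℝ)/2+s+1 by linarith) hB).const_mul _).add
      ((mellin_integrableOn has hB).const_mul _)
  have hfInt := (hess_integrableOn ht hτ has (x := x) (i := i) (j := j)).norm
  have hbound : ∀ r ∈ Set.Ioi (0:ℝ),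
      ‖heatHessEntry d x (τ*r) i j * r * Real.exp (-t^2/(4*r)) * r^(-s-1)‖ ≤ g r := by
    intro r hr
    have hr0 : (0:ℝ) < r := hr
    rw [Real.norm_eq_abs, hess_point d s x t τ r i j hτ hr0, ← hBdef]
    set M1 := Real.exp (-B/r) * r^(-((d:ℝ)/2+s+1)-1) with hM1d
    set M2 := Real.exp (-B/r) * r^(-((d:ℝ)/2+s)-1) with hM2d
    set c1 := x i * x j/(4*τ^2) with hc1
    set c2 := (if i = j then (1:ℝ) else 0)/(2*τ) with hc2
    have hM1 : 0 ≤ M1 := by rw [hM1d]; positivity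
    have hM2 : 0 ≤ M2 := by rw [hM2d]; positivity
    have hCτ0 : (0:ℝ) ≤ (4*π*τ)^(-(d:ℝ)/2) := le_of_lt (rpow_pos_of_pos (by positivity) _)
    rw [abs_mul, abs_of_nonneg hCτ0]
    have t1 : |c1 * M1 - c2 * M2| ≤ |c1| * M1 + |c2| * M2 := by
      calc |c1 * M1 - c2 * M2| ≤ |c1 * M1| + |c2 * M2| := abs_sub _ _
        _ = |c1| * M1 + |c2| * M2 := by
            rw [abs_mul c1 M1, abs_mul c2 M2, abs_of_nonneg hM1, abs_of_nonneg hM2]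
    have h1 : |c1| = |x i * x j|/(4*τ^2) := by
      rw [hc1, abs_div, abs_of_pos (show (0:ℝ) < 4*τ^2 by positivity)]
    calc (4*π*τ)^(-(d:ℝ)/2) * |c1 * M1 - c2 * M2|
        ≤ (4*π*τ)^(-(d:ℝ)/2) * (|c1| * M1 + |c2| * M2) := mul_le_mul_of_nonneg_left t1 hCτ0
      _ ≤ Cm * (|x i * x j|/(4*m^2) * M1 + 1/(2*m) * M2) := by
          apply mul_le_mul hCτCm _ (by positivity) hCm0
          refine add_le_add (mul_le_mul_of_nonneg_right ?_ hM1)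
            (mul_le_mul_of_nonneg_right hb2 hM2)
          rw [h1]; exact hb1
      _ = g r := by rw [hg]; ring
  calc ∫ r in Set.Ioi (0:ℝ),
        ‖heatHessEntry d x (τ*r) i j * r * Real.exp (-t^2/(4*r)) * r^(-s-1)‖
      ≤ ∫ r in Set.Ioi (0:ℝ), g r := setIntegral_mono_on hfInt hgInt measurableSet_Ioi hbound
    _ = Cm * (|x i * x j|/(4*m^2)) * (Real.Gamma ((d:ℝ)/2+s+1)/B^((d:ℝ)/2+s+1))
        + Cm * (1/(2*m)) * (Real.Gamma ((d:ℝ)/2+s)/B^((d:ℝ)/2+s)) := by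
        rw [hg, MeasureTheory.integral_add
          ((mellin_integrableOn (show 0 < (d:ℝ)/2+s+1 by linarith) hB).const_mul _)
          ((mellin_integrableOn has hB).const_mul _),
          integral_const_mul, integral_const_mul,
          mellin_integral (show 0 < (d:ℝ)/2+s+1 by linarith) hB, mellin_integral has hB]
    _ ≤ Cm * (|x i * x j|/(4*m^2)) * (Real.Gamma ((d:ℝ)/2+s+1)/(t^2/4)^((d:ℝ)/2+s+1))
        + Cm * (1/(2*m)) * (Real.Gamma ((d:ℝ)/2+s)/(t^2/4)^((d:ℝ)/2+s)) := by
        have q1 : (0:ℝ) < t^2/4 := by positivity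
        apply add_le_add
        · refine mul_le_mul_of_nonneg_left ?_ (by positivity)
          exact div_le_div_of_nonneg_left (Real.Gamma_nonneg_of_nonneg (by linarith))
            (rpow_pos_of_pos q1 _) (Real.rpow_le_rpow q1.le hQB (by linarith))
        · refine mul_le_mul_of_nonneg_left ?_ (by positivity)
          exact div_le_div_of_nonneg_left (Real.Gamma_nonneg_of_nonneg (by linarith))
            (rpow_pos_of_pos q1 _) (Real.rpow_le_rpow q1.le hQB (by linarith))
    _ = _ := by ring

lemma hess_measurable (ht : True) :
    Measurable (fun p : ℝ × ℝ =>
      heatHessEntry d x (p.2 * p.1) i j * p.1 * Real.exp (-t^2/(4*p.1)) * p.1 ^ (-s-1)) := by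
  unfold heatHessEntry
  fun_prop

lemma fub (ht : 0 < t) (hm : 0 < m) (has : 0 < (d:ℝ)/2 + s) :
    Integrable (Function.uncurry (fun r τ : ℝ =>
        heatHessEntry d x (τ*r) i j * r * Real.exp (-t^2/(4*r)) * r^(-s-1)))
      ((volume.restrict (Set.Ioi 0)).prod (volume.restrict (Set.Ioc m M))) := by
  have hmeas : Measurable (fun p : ℝ × ℝ =>
      heatHessEntry d x (p.2 * p.1) i j * p.1 * Real.exp (-t^2/(4*p.1)) * p.1 ^ (-s-1)) :=
    hess_measurable (t := t) (s := s) (x := x) (i := i) (j := j) trivial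
  have hfin : IsFiniteMeasure (volume.restrict (Set.Ioc m M)) :=
    ⟨by rw [Measure.restrict_apply_univ]; exact measure_Ioc_lt_top⟩
  refine (integrable_prod_iff' hmeas.aestronglyMeasurable).2 ⟨?_, ?_⟩
  · filter_upwards [ae_restrict_mem measurableSet_Ioc] with τ hτ
    exact hess_integrableOn ht (hm.trans hτ.1) has
  · refine Integrable.mono' (integrable_const ((4*π*m)^(-(d:ℝ)/2) *
        ((|x i * x j|/(4*m^2)) * (Real.Gamma ((d:ℝ)/2+s+1)/(t^2/4)^((d:ℝ)/2+s+1))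
          + (1/(2*m)) * (Real.Gamma ((d:ℝ)/2+s)/(t^2/4)^((d:ℝ)/2+s)))))
      ((hmeas.comp measurable_swap).norm.aestronglyMeasurable.integral_prod_right') ?_
    filter_upwards [ae_restrict_mem measurableSet_Ioc] with τ hτ
    rw [Real.norm_of_nonneg (integral_nonneg (fun r => norm_nonneg _))]
    exact hess_norm_bound ht hm hτ.1.le has

lemma algA (d : ℕ) (y s t τ : ℝ) (hy : 0 ≤ y) (ht : 0 < t) (hτ : 0 < τ) (hs : 0 < s) :
    t^(2*s)/((2:ℝ)^(2*s)*Real.Gamma s) *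
      ((4*π*τ)^(-(d:ℝ)/2) * (Real.Gamma ((d:ℝ)/2+s) / ((y/τ + t^2)/4)^((d:ℝ)/2+s)))
    = (Real.Gamma ((d:ℝ)/2+s)/(π^((d:ℝ)/2) * Real.Gamma s)) * τ^s *
        (t^(2*s) / (y + τ*t^2)^(((d:ℝ)+2*s)/2)) := by
  have h := alg_main d (Real.Gamma ((d:ℝ)/2+s)) (Real.Gamma s) y s t τ s hy ht hτ
    (ne_of_gt (Real.Gamma_pos_of_pos hs))
  rw [sub_self, Real.rpow_zero, one_mul] at h
  rw [h]
  congr 2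
  ring

lemma algB (d : ℕ) (y s t τ : ℝ) (hy : 0 ≤ y) (ht : 0 < t) (hτ : 0 < τ) (hs : 0 < s)
    (has : 0 < (d:ℝ)/2 + s) :
    t^(2*s)/((2:ℝ)^(2*s)*Real.Gamma s) *
      ((4*π*τ)^(-(d:ℝ)/2) * (Real.Gamma ((d:ℝ)/2+s+1) / ((y/τ + t^2)/4)^((d:ℝ)/2+s+1)))
    = 4 * (((d:ℝ)/2+s) * Real.Gamma ((d:ℝ)/2+s)/(π^((d:ℝ)/2) * Real.Gamma s)) * τ^(s+1) *
        (t^(2*s) / (y + τ*t^2)^(((d:ℝ)+2*s+2)/2)) := by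
  have h := alg_main d (Real.Gamma ((d:ℝ)/2+s+1)) (Real.Gamma s) y s t τ (s+1) hy ht hτ
    (ne_of_gt (Real.Gamma_pos_of_pos hs))
  rw [show (d:ℝ)/2+(s+1) = (d:ℝ)/2+s+1 by ring] at h
  rw [show (s+1)-s = (1:ℝ) by ring, Real.rpow_one] at h
  rw [h, Real.Gamma_add_one (ne_of_gt has)]
  congr 2
  ring

lemma per_tau_final (d : ℕ) (s t τ : ℝ) (x : EuclideanSpace ℝ (Fin d)) (i j : Fin d)
    (ht : 0 < t) (hτ : 0 < τ) (hs : 0 < s) (has : 0 < (d:ℝ)/2 + s) :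
    t^(2*s)/((2:ℝ)^(2*s)*Real.Gamma s) *
      ((4*π*τ)^(-(d:ℝ)/2) * ((x i * x j)/(4*τ^2) *
          (Real.Gamma ((d:ℝ)/2+s+1) / ((‖x‖^2/τ + t^2)/4)^((d:ℝ)/2+s+1))
        - (if i = j then (1:ℝ) else 0)/(2*τ) *
          (Real.Gamma ((d:ℝ)/2+s) / ((‖x‖^2/τ + t^2)/4)^((d:ℝ)/2+s))))
    = (((d:ℝ)+2*s) * (Real.Gamma ((d:ℝ)/2+s)/(2*π^((d:ℝ)/2)*Real.Gamma s)) * t^(2*s)) *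
        (τ^(s-1)/(‖x‖^2+τ*t^2)^(((d:ℝ)+2*s+2)/2)) * (x i * x j)
      - (Real.Gamma ((d:ℝ)/2+s)/(2*π^((d:ℝ)/2)*Real.Gamma s) * t^(2*s)) *
        (τ^(s-1)/(‖x‖^2+τ*t^2)^(((d:ℝ)+2*s)/2)) * (if i = j then (1:ℝ) else 0) := by
  have hA := algA d (‖x‖^2) s t τ (by positivity) ht hτ hs
  have hB := algB d (‖x‖^2) s t τ (by positivity) ht hτ hs has
  calc t^(2*s)/((2:ℝ)^(2*s)*Real.Gamma s) *
      ((4*π*τ)^(-(d:ℝ)/2) * ((x i * x j)/(4*τ^2) *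
          (Real.Gamma ((d:ℝ)/2+s+1) / ((‖x‖^2/τ + t^2)/4)^((d:ℝ)/2+s+1))
        - (if i = j then (1:ℝ) else 0)/(2*τ) *
          (Real.Gamma ((d:ℝ)/2+s) / ((‖x‖^2/τ + t^2)/4)^((d:ℝ)/2+s))))
      = (x i * x j)/(4*τ^2) * (t^(2*s)/((2:ℝ)^(2*s)*Real.Gamma s) *
          ((4*π*τ)^(-(d:ℝ)/2) *
            (Real.Gamma ((d:ℝ)/2+s+1) / ((‖x‖^2/τ + t^2)/4)^((d:ℝ)/2+s+1))))
        - (if i = j then (1:ℝ) else 0)/(2*τ) * (t^(2*s)/((2:ℝ)^(2*s)*Real.Gamma s) *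
          ((4*π*τ)^(-(d:ℝ)/2) *
            (Real.Gamma ((d:ℝ)/2+s) / ((‖x‖^2/τ + t^2)/4)^((d:ℝ)/2+s)))) := by ring
    _ = (x i * x j)/(4*τ^2) *
          (4 * (((d:ℝ)/2+s) * Real.Gamma ((d:ℝ)/2+s)/(π^((d:ℝ)/2) * Real.Gamma s)) *
            τ^(s+1) * (t^(2*s) / (‖x‖^2 + τ*t^2)^(((d:ℝ)+2*s+2)/2)))
        - (if i = j then (1:ℝ) else 0)/(2*τ) *
          ((Real.Gamma ((d:ℝ)/2+s)/(π^((d:ℝ)/2) * Real.Gamma s)) * τ^s *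
            (t^(2*s) / (‖x‖^2 + τ*t^2)^(((d:ℝ)+2*s)/2))) := by rw [hA, hB]
    _ = _ := by
        have e1 : τ^(s+1) = τ^(s-1)*τ^2 := by
          rw [← Real.rpow_natCast τ 2, ← Real.rpow_add hτ]
          congr 1; push_cast; ring
        have e2 : τ^s = τ^(s-1)*τ := by
          nth_rewrite 3 [show τ = τ^(1:ℝ) by rw [Real.rpow_one]]
          rw [← Real.rpow_add hτ]
          congr 1; ring
        rw [e1, e2]
        set δ : ℝ := (if i = j then (1:ℝ) else 0) with hδ
        have hπ : π^((d:ℝ)/2) ≠ 0 := ne_of_gt (rpow_pos_of_pos pi_pos _)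
        have hΓs : Real.Gamma s ≠ 0 := ne_of_gt (Real.Gamma_pos_of_pos hs)
        have hX : (0:ℝ) < ‖x‖^2 + τ*t^2 := by positivity
        have hX2 : (‖x‖^2+τ*t^2)^(((d:ℝ)+2*s)/2) ≠ 0 := ne_of_gt (rpow_pos_of_pos hX _)
        have hX3 : (‖x‖^2+τ*t^2)^(((d:ℝ)+2*s+2)/2) ≠ 0 := ne_of_gt (rpow_pos_of_pos hX _)
        have hτ0 : τ ≠ 0 := hτ.ne'
        field_simp

end perTau
end LPaux

open LPaux in
/-- The subordination formula for the Lamé–Navier Poisson kernel: the integral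
`(t^{2s}/(2^{2s}Γ(s))) ∫_0^∞ W(x,r) e^{−t²/(4r)} r^{−s−1} dr` converges absolutely
entrywise and equals the closed-form expression `P(x,t)`. -/
theorem lamePoisson_subordination (d : ℕ) (hd : 2 ≤ d) (s : ℝ)
    (hs : s ∈ Set.Ioo (0 : ℝ) 1) (μ lam : ℝ) (hμ : 0 < μ) (hlam : 0 < 2 * μ + lam)
    (x : EuclideanSpace ℝ (Fin d)) (t : ℝ) (ht : 0 < t) (i j : Fin d) :
    IntegrableOn
      (fun r : ℝ =>
        lameHeatEntry d μ lam x r i j * Real.exp (-t ^ 2 / (4 * r)) * r ^ (-s - 1))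
      (Set.Ioi 0) ∧
    (t ^ (2 * s) / ((2 : ℝ) ^ (2 * s) * Real.Gamma s)) *
        (∫ r in Set.Ioi (0 : ℝ),
          lameHeatEntry d μ lam x r i j * Real.exp (-t ^ 2 / (4 * r)) * r ^ (-s - 1)) =
      lamePoissonEntry d s μ lam x t i j := by
  have hs0 : 0 < s := hs.1
  have has : 0 < (d:ℝ)/2 + s := by
    have : (0:ℝ) ≤ (d:ℝ)/2 := by positivity
    linarith
  set ν : ℝ := 2 * μ + lam with hν
  -- notation
  set f : ℝ → ℝ → ℝ := fun r τ =>
    heatHessEntry d x (τ*r) i j * r * Real.exp (-t^2/(4*r)) * r^(-s-1) with hf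
  set g1 : ℝ → ℝ := fun r =>
    heatKernel d x (μ*r) * Real.exp (-t^2/(4*r)) * r^(-s-1) with hg1
  set δ : ℝ := (if i = j then (1:ℝ) else 0) with hδ
  -- pointwise split of the integrand
  have hFsplit : ∀ r ∈ Set.Ioi (0:ℝ),
      lameHeatEntry d μ lam x r i j * Real.exp (-t ^ 2 / (4 * r)) * r ^ (-s - 1)
      = δ * g1 r + ∫ τ in μ..ν, f r τ := by
    intro r hr
    have hr0 : (0:ℝ) < r := hr
    have hsub := intervalIntegral.integral_comp_mul_right
      (fun σ => heatHessEntry d x σ i j) (a := μ) (b := ν) (c := r) hr0.ne'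
    have h2 : (∫ σ in (μ*r)..(ν*r), heatHessEntry d x σ i j)
        = r * ∫ τ in μ..ν, heatHessEntry d x (τ*r) i j := by
      rw [hsub, smul_eq_mul, ← mul_assoc, mul_inv_cancel₀ hr0.ne', one_mul]
    have h3 : (∫ τ in μ..ν, f r τ)
        = (∫ τ in μ..ν, heatHessEntry d x (τ*r) i j) *
            (r * (Real.exp (-t^2/(4*r)) * r^(-s-1))) := by
      calc (∫ τ in μ..ν, f r τ)
          = ∫ τ in μ..ν, heatHessEntry d x (τ*r) i j *
              (r * (Real.exp (-t^2/(4*r)) * r^(-s-1))) :=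
            intervalIntegral.integral_congr (fun τ _ => by rw [hf]; ring)
        _ = _ := intervalIntegral.integral_mul_const _ _
    rw [lameHeatEntry, h3, hg1, h2, hδ]
    ring
  -- orientation-independent core
  have hmin : 0 < min μ ν := lt_min hμ hlam
  have key : IntegrableOn (fun r : ℝ =>
        lameHeatEntry d μ lam x r i j * Real.exp (-t ^ 2 / (4 * r)) * r ^ (-s - 1))
        (Set.Ioi 0) ∧
      (∫ r in Set.Ioi (0:ℝ),
          lameHeatEntry d μ lam x r i j * Real.exp (-t ^ 2 / (4 * r)) * r ^ (-s - 1))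
        = δ * (∫ r in Set.Ioi (0:ℝ), g1 r)
          + ∫ τ in μ..ν, (∫ r in Set.Ioi (0:ℝ), f r τ) := by
    have hG1int : IntegrableOn (fun r => δ * g1 r) (Set.Ioi (0:ℝ)) :=
      (heat_integrableOn ht hμ has).const_mul δ
    rcases le_total μ ν with hor | hor
    · -- μ ≤ ν
      have hfub := fub (x := x) (i := i) (j := j) (m := μ) (M := ν) ht hμ has
      have hIi : IntegrableOn (fun r => ∫ τ in Set.Ioc μ ν, f r τ) (Set.Ioi (0:ℝ)) := by
        exact hfub.integral_prod_left
      have hswap : (∫ r in Set.Ioi (0:ℝ), ∫ τ in Set.Ioc μ ν, f r τ)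
          = ∫ τ in Set.Ioc μ ν, ∫ r in Set.Ioi (0:ℝ), f r τ := by
        simpa only [Function.uncurry_apply_pair] using integral_integral_swap hfub
      have hsplit2 : ∀ r ∈ Set.Ioi (0:ℝ),
          lameHeatEntry d μ lam x r i j * Real.exp (-t ^ 2 / (4 * r)) * r ^ (-s - 1)
          = δ * g1 r + ∫ τ in Set.Ioc μ ν, f r τ := by
        intro r hr
        rw [hFsplit r hr, intervalIntegral.integral_of_le hor]
      constructor
      · exact IntegrableOn.congr_fun (hG1int.add hIi)
          (fun r hr => (hsplit2 r hr).symm) measurableSet_Ioi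
      · rw [setIntegral_congr_fun measurableSet_Ioi hsplit2,
          MeasureTheory.integral_add hG1int hIi, integral_const_mul, hswap,
          intervalIntegral.integral_of_le hor]
    · -- ν ≤ μ
      have hfub := fub (x := x) (i := i) (j := j) (m := ν) (M := μ) ht hlam has
      have hIi : IntegrableOn (fun r => ∫ τ in Set.Ioc ν μ, f r τ) (Set.Ioi (0:ℝ)) := by
        exact hfub.integral_prod_left
      have hswap : (∫ r in Set.Ioi (0:ℝ), ∫ τ in Set.Ioc ν μ, f r τ)
          = ∫ τ in Set.Ioc ν μ, ∫ r in Set.Ioi (0:ℝ), f r τ := by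
        simpa only [Function.uncurry_apply_pair] using integral_integral_swap hfub
      have hsplit2 : ∀ r ∈ Set.Ioi (0:ℝ),
          lameHeatEntry d μ lam x r i j * Real.exp (-t ^ 2 / (4 * r)) * r ^ (-s - 1)
          = δ * g1 r - ∫ τ in Set.Ioc ν μ, f r τ := by
        intro r hr
        rw [hFsplit r hr, intervalIntegral.integral_symm ν μ,
          intervalIntegral.integral_of_le hor]
        ring
      constructor
      · exact IntegrableOn.congr_fun (hG1int.sub hIi)
          (fun r hr => (hsplit2 r hr).symm) measurableSet_Ioi
      · rw [setIntegral_congr_fun measurableSet_Ioi hsplit2,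
          MeasureTheory.integral_sub hG1int hIi, integral_const_mul, hswap,
          intervalIntegral.integral_symm ν μ, intervalIntegral.integral_of_le hor]
        ring
  refine ⟨key.1, ?_⟩
  rw [key.2]
  simp only [hg1, hf]
  rw [heat_integral ht hμ has]
  rw [mul_add, mul_left_comm (t^(2*s)/((2:ℝ)^(2*s)*Real.Gamma s)) δ,
    algA d (‖x‖^2) s t μ (by positivity) ht hμ hs0,
    ← intervalIntegral.integral_const_mul]
  -- rewrite the interval integrand pointwise
  have hW : Set.EqOn
      (fun τ => (t^(2*s)/((2:ℝ)^(2*s)*Real.Gamma s)) * ∫ r in Set.Ioi (0:ℝ),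
        heatHessEntry d x (τ*r) i j * r * Real.exp (-t^2/(4*r)) * r^(-s-1))
      (fun τ => (((d:ℝ)+2*s) *
          (Real.Gamma ((d:ℝ)/2+s)/(2*π^((d:ℝ)/2)*Real.Gamma s)) * t^(2*s)) *
          (τ^(s-1)/(‖x‖^2+τ*t^2)^(((d:ℝ)+2*s+2)/2)) * (x i * x j)
        - (Real.Gamma ((d:ℝ)/2+s)/(2*π^((d:ℝ)/2)*Real.Gamma s) * t^(2*s)) *
          (τ^(s-1)/(‖x‖^2+τ*t^2)^(((d:ℝ)+2*s)/2)) * δ)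
      (Set.uIcc μ ν) := by
    intro τ hτ
    have hτ0 : 0 < τ := hmin.trans_le hτ.1
    simp only
    rw [hess_integral ht hτ0 has, per_tau_final d s t τ x i j ht hτ0 hs0 has, hδ]
  rw [intervalIntegral.integral_congr hW]
  -- split the interval integral
  have hXpos : ∀ τ ∈ Set.uIcc μ ν, (0:ℝ) < ‖x‖^2 + τ*t^2 := by
    intro τ hτ
    have hτ0 : 0 < τ := hmin.trans_le hτ.1
    positivity
  have hcont : ∀ p : ℝ, ContinuousOn
      (fun τ : ℝ => τ^(s-1)/(‖x‖^2+τ*t^2)^p) (Set.uIcc μ ν) := by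
    intro p
    apply ContinuousOn.div
    · exact ContinuousOn.rpow_const continuousOn_id
        (fun τ hτ => Or.inl (ne_of_gt (hmin.trans_le hτ.1)))
    · exact ContinuousOn.rpow_const
        ((continuous_const.add (continuous_id.mul continuous_const)).continuousOn)
        (fun τ hτ => Or.inl (ne_of_gt (hXpos τ hτ)))
    · exact fun τ hτ => ne_of_gt (rpow_pos_of_pos (hXpos τ hτ) _)
  have hi3 : IntervalIntegrable
      (fun τ : ℝ => τ^(s-1)/(‖x‖^2+τ*t^2)^(((d:ℝ)+2*s+2)/2)) volume μ ν :=
    (hcont _).intervalIntegrable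
  have hi2 : IntervalIntegrable
      (fun τ : ℝ => τ^(s-1)/(‖x‖^2+τ*t^2)^(((d:ℝ)+2*s)/2)) volume μ ν :=
    (hcont _).intervalIntegrable
  rw [intervalIntegral.integral_sub
      ((hi3.const_mul _).mul_const (x i * x j)) ((hi2.const_mul _).mul_const δ),
    intervalIntegral.integral_mul_const, intervalIntegral.integral_mul_const,
    intervalIntegral.integral_const_mul, intervalIntegral.integral_const_mul,
    lamePoissonEntry, hδ]
  ring
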